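/- Weyl's law for the cube: the counting function 𝓝(𝓔) = #{n ∈ (ℤ_{>0})^d : ∑_i (n_i π/L)^{2s} ≤ 𝓔} satisfies 𝓝(𝓔) = (L^d/(2π)^d)·|B_{d,2s}|·𝓔^{d/(2s)} + o(𝓔^{d/(2s)}) as 𝓔 → ∞, where |B_{d,2s}| = (2Γ(1+1/(2s)))^d/Γ(1+d/(2s)). -/

import Mathlib

open MeasureTheory Real Filter Set

lemma weyl_null_hyperplane (d : ℕ) (i : Fin d) :
    volume {x : Fin d → ℝ | x i = 0} = 0 := by
  have : {x : Fin d → ℝ | x i = 0} =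
      Set.pi Set.univ (fun j => if j = i then ({0} : Set ℝ) else Set.univ) := by
    ext x
    simp only [Set.mem_setOf_eq, Set.mem_pi, Set.mem_univ, forall_true_left]
    constructor
    · intro h j
      by_cases hj : j = i <;> simp [hj, h]
    · intro h
      have := h i
      simpa using this
  rw [this, volume_pi_pi]
  refine Finset.prod_eq_zero (Finset.mem_univ i) ?_
  simp


lemma weyl_measurable_sumrpow (d : ℕ) (p : ℝ) (hp0 : 0 ≤ p) (c : ℝ) :
    Measurable (fun x : Fin d → ℝ => ∑ i, (x i + c) ^ p) := by
  refine Finset.measurable_sum _ fun i _ => ?_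
  exact (Real.continuous_rpow_const hp0).measurable.comp
    (by fun_prop : Measurable fun x : Fin d → ℝ => x i + c)

lemma weyl_measurable_A (d : ℕ) (p : ℝ) (hp0 : 0 ≤ p) (a c T : ℝ) :
    MeasurableSet {x : Fin d → ℝ | (∀ i, a ≤ x i) ∧ ∑ i, (x i + c) ^ p ≤ T} := by
  have : {x : Fin d → ℝ | (∀ i, a ≤ x i) ∧ ∑ i, (x i + c) ^ p ≤ T}
      = (Set.pi Set.univ fun _ => Set.Ici a) ∩ {x | ∑ i, (x i + c) ^ p ≤ T} := by
    ext x
    simp only [Set.mem_inter_iff, Set.mem_pi, Set.mem_univ, forall_true_left, Set.mem_Ici,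
      Set.mem_setOf_eq]
  rw [this]
  exact (MeasurableSet.univ_pi fun _ => measurableSet_Ici).inter
    (measurableSet_le (weyl_measurable_sumrpow d p hp0 c) measurable_const)

lemma weyl_coord_le' {p T x : ℝ} (hp : 0 < p) (hx : 0 ≤ x) (h : x ^ p ≤ T) :
    x ≤ T ^ (1/p) := by
  have h2 : (x ^ p) ^ (1/p) ≤ T ^ (1/p) :=
    rpow_le_rpow (rpow_nonneg hx p) h (by positivity)
  rwa [← Real.rpow_mul hx, mul_one_div_cancel (ne_of_gt hp), Real.rpow_one] at h2

lemma weyl_vol_lower (d : ℕ) (p : ℝ) (hp : 0 < p) (T : ℝ) (hT : 0 ≤ T) :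
    volume {x : Fin d → ℝ | (∀ i, 0 ≤ x i) ∧ ∑ i, (x i) ^ p ≤ T}
      ≤ volume {x : Fin d → ℝ | (∀ i, 0 ≤ x i) ∧ ∑ i, (x i + 1) ^ p ≤ T}
        + d * ENNReal.ofReal (T ^ (1/p)) ^ (d - 1) := by
  classical
  set M := T ^ (1/p) with hM
  have hM0 : 0 ≤ M := rpow_nonneg hT _
  set G : Set (Fin d → ℝ) := {y | (∀ i, (1:ℝ) ≤ y i) ∧ ∑ i, (y i) ^ p ≤ T} with hG
  -- translation
  have htrans : volume {x : Fin d → ℝ | (∀ i, 0 ≤ x i) ∧ ∑ i, (x i + 1) ^ p ≤ T}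
      = volume G := by
    have hGmeas : MeasurableSet G := by
      have h := weyl_measurable_A d p (le_of_lt hp) 1 0 T
      simp only [add_zero] at h
      rw [hG]; exact h
    have hpre : {x : Fin d → ℝ | (∀ i, 0 ≤ x i) ∧ ∑ i, (x i + 1) ^ p ≤ T}
        = (fun x : Fin d → ℝ => x + fun _ => (1:ℝ)) ⁻¹' G := by
      ext x
      simp only [Set.mem_preimage, hG, Set.mem_setOf_eq, Pi.add_apply]
      constructor
      · rintro ⟨h1, h2⟩
        exact ⟨fun i => by linarith [h1 i], h2⟩
      · rintro ⟨h1, h2⟩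
        exact ⟨fun i => by linarith [h1 i], h2⟩
    rw [hpre]
    exact (measurePreserving_add_right volume _).measure_preimage
      hGmeas.nullMeasurableSet
  -- boxes
  set Box : Fin d → Set (Fin d → ℝ) := fun i =>
    Set.pi Set.univ (fun j => if j = i then Set.Ico (0:ℝ) 1 else Set.Icc 0 M) with hBox
  have hBoxvol : ∀ i, volume (Box i) = ENNReal.ofReal M ^ (d - 1) := by
    intro i
    rw [hBox]
    rw [volume_pi_pi]
    rw [← Finset.mul_prod_erase Finset.univ _ (Finset.mem_univ i)]
    rw [if_pos rfl]
    have h1 : volume (Set.Ico (0:ℝ) 1) = 1 := by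
      rw [Real.volume_Ico]; norm_num
    rw [h1, one_mul]
    rw [Finset.prod_congr rfl (fun j hj => by
      rw [if_neg (Finset.ne_of_mem_erase hj), Real.volume_Icc, sub_zero])]
    rw [Finset.prod_const, Finset.card_erase_of_mem (Finset.mem_univ i),
      Finset.card_univ, Fintype.card_fin]
  -- inclusion
  have hincl : {x : Fin d → ℝ | (∀ i, 0 ≤ x i) ∧ ∑ i, (x i) ^ p ≤ T}
      ⊆ G ∪ ⋃ i, Box i := by
    rintro x ⟨h1, h2⟩
    by_cases hx : ∀ i, (1:ℝ) ≤ x i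
    · exact Or.inl ⟨hx, h2⟩
    · push_neg at hx
      obtain ⟨i, hi⟩ := hx
      refine Or.inr (Set.mem_iUnion.mpr ⟨i, ?_⟩)
      intro j _
      have hxj : x j ≤ M := by
        refine weyl_coord_le' hp (h1 j) ?_
        refine le_trans (Finset.single_le_sum (f := fun k => (x k) ^ p)
          (fun k _ => rpow_nonneg (h1 k) _) (Finset.mem_univ j)) h2
      show x j ∈ if j = i then Set.Ico (0:ℝ) 1 else Set.Icc 0 M
      by_cases hj : j = i
      · subst hj
        rw [if_pos rfl]
        exact ⟨h1 j, hi⟩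
      · rw [if_neg hj]
        exact ⟨h1 j, hxj⟩
  calc volume {x : Fin d → ℝ | (∀ i, 0 ≤ x i) ∧ ∑ i, (x i) ^ p ≤ T}
      ≤ volume (G ∪ ⋃ i, Box i) := measure_mono hincl
    _ ≤ volume G + volume (⋃ i, Box i) := measure_union_le _ _
    _ ≤ volume G + ∑ i : Fin d, volume (Box i) := by
        gcongr
        exact measure_iUnion_fintype_le _ _
    _ = volume G + d * ENNReal.ofReal M ^ (d - 1) := by
        rw [Finset.sum_congr rfl fun i _ => hBoxvol i, Finset.sum_const,
          Finset.card_univ, Fintype.card_fin, nsmul_eq_mul]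
    _ = _ := by rw [htrans]

lemma weyl_orthant_volume (d : ℕ) (hd : 1 ≤ d) (p : ℝ) (hp : 1 ≤ p) (T : ℝ) (hT : 0 ≤ T) :
    volume {x : Fin d → ℝ | (∀ i, 0 ≤ x i) ∧ ∑ i, (x i) ^ p ≤ T}
      = (ENNReal.ofReal (T ^ (1/p))) ^ d *
        ENNReal.ofReal ((2 * Gamma (1/p + 1)) ^ d / Gamma ((d:ℝ)/p + 1)) / 2 ^ d := by
  have hpos : (0:ℝ) < p := by linarith
  haveI : Nonempty (Fin d) := Fin.pos_iff_nonempty.mp hd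
  set A : Set (Fin d → ℝ) := {x | (∀ i, 0 ≤ x i) ∧ ∑ i, (x i) ^ p ≤ T} with hA
  set B : Set (Fin d → ℝ) := {x | (∑ i, |x i| ^ p) ^ (1/p) ≤ T ^ (1/p)} with hB
  have hAmeas : MeasurableSet A := by
    have h := weyl_measurable_A d p (le_of_lt hpos) 0 0 T
    simp only [add_zero] at h
    rw [hA]
    exact h
  -- volume of B
  have volB : volume B = (ENNReal.ofReal (T ^ (1/p))) ^ d *
      ENNReal.ofReal ((2 * Gamma (1/p + 1)) ^ d / Gamma ((d:ℝ)/p + 1)) := by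
    have h := MeasureTheory.volume_sum_rpow_le (Fin d) hp (T ^ (1/p))
    rw [Fintype.card_fin] at h
    exact h
  have hsum_nonneg : ∀ x : Fin d → ℝ, 0 ≤ ∑ i, |x i| ^ p := fun x =>
    Finset.sum_nonneg fun i _ => rpow_nonneg (abs_nonneg _) _
  have hmemB : ∀ x : Fin d → ℝ, x ∈ B ↔ ∑ i, |x i| ^ p ≤ T := by
    intro x
    rw [hB, Set.mem_setOf_eq,
      Real.rpow_le_rpow_iff (hsum_nonneg x) hT (by positivity : (0:ℝ) < 1/p)]
  -- the sign maps
  classical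
  let σ : (Fin d → Bool) → (Fin d → ℝ) → (Fin d → ℝ) :=
    fun ε x i => if ε i then x i else -x i
  have hσmp : ∀ ε, MeasurePreserving (σ ε) volume volume := by
    intro ε
    have h : MeasurePreserving
        (fun (x : Fin d → ℝ) i => (fun t : ℝ => if ε i = true then t else -t) (x i))
        volume volume := by
      refine volume_preserving_pi (f := fun (i : Fin d) (t : ℝ) => if ε i = true then t else -t) fun i => ?_
      cases hεi : ε i
      · simp only [hεi, Bool.false_eq_true, if_false]
        exact Measure.measurePreserving_neg (volume : Measure ℝ)
      · simp only [hεi, if_true]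
        exact MeasurePreserving.id (volume : Measure ℝ)
    exact h
  -- the orthants
  let O : (Fin d → Bool) → Set (Fin d → ℝ) := fun ε => σ ε ⁻¹' A
  have hOvol : ∀ ε, volume (O ε) = volume A := fun ε =>
    (hσmp ε).measure_preimage hAmeas.nullMeasurableSet
  have habs : ∀ (ε : Fin d → Bool) (x : Fin d → ℝ), (∀ i, 0 ≤ σ ε x i) →
      ∀ i, σ ε x i = |x i| := by
    intro ε x h i
    have h' := h i
    cases hε : ε i
    · simp only [σ, hε, Bool.false_eq_true, if_false] at h' ⊢
      rw [abs_of_nonpos (by linarith)]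
    · simp only [σ, hε, if_true] at h' ⊢
      rw [abs_of_nonneg h']
  have hOmem : ∀ ε x, x ∈ O ε ↔ (∀ i, 0 ≤ σ ε x i) ∧ ∑ i, |x i| ^ p ≤ T := by
    intro ε x
    constructor
    · rintro ⟨h1, h2⟩
      refine ⟨h1, ?_⟩
      calc ∑ i, |x i| ^ p = ∑ i, (σ ε x i) ^ p := by
            refine Finset.sum_congr rfl fun i _ => ?_
            rw [habs ε x h1 i]
        _ ≤ T := h2
    · rintro ⟨h1, h2⟩
      refine ⟨h1, ?_⟩
      calc ∑ i, (σ ε x i) ^ p = ∑ i, |x i| ^ p := by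
            refine Finset.sum_congr rfl fun i _ => ?_
            rw [habs ε x h1 i]
        _ ≤ T := h2
  -- B = union of orthants
  have hBU : B = ⋃ ε : Fin d → Bool, O ε := by
    ext x
    rw [hmemB, Set.mem_iUnion]
    constructor
    · intro hx
      refine ⟨fun i => decide (0 ≤ x i), (hOmem _ _).mpr ⟨fun i => ?_, hx⟩⟩
      simp only [σ, decide_eq_true_eq]
      by_cases h : 0 ≤ x i
      · rw [if_pos h]
        exact h
      · rw [if_neg h]
        push_neg at h
        linarith
    · rintro ⟨ε, hx⟩
      exact ((hOmem ε x).mp hx).2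
  -- a.e. disjointness
  have hdisj : Pairwise (Function.onFun (AEDisjoint volume) O) := by
    intro ε ε' hne
    obtain ⟨i, hi⟩ : ∃ i, ε i ≠ ε' i := by
      by_contra h
      push_neg at h
      exact hne (funext h)
    refine measure_mono_null (fun x hx => ?_) (weyl_null_hyperplane d i)
    obtain ⟨hx1, hx2⟩ := hx
    have h1 := ((hOmem ε x).mp hx1).1 i
    have h2 := ((hOmem ε' x).mp hx2).1 i
    simp only [σ] at h1 h2
    cases hε : ε i <;> cases hε' : ε' i <;> rw [hε] at h1 hi <;> rw [hε'] at h2 hi <;>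
      simp_all <;> linarith
  have hOnm : ∀ ε, NullMeasurableSet (O ε) volume := by
    intro ε
    exact ((hσmp ε).measurable hAmeas).nullMeasurableSet
  have key : volume B = (2:ENNReal) ^ d * volume A := by
    rw [hBU, measure_iUnion₀ hdisj hOnm, tsum_fintype]
    simp only [hOvol]
    rw [Finset.sum_const, Finset.card_univ, Fintype.card_fun, Fintype.card_bool,
      Fintype.card_fin, nsmul_eq_mul]
    norm_cast
  rw [volB] at key
  have h1 : ((2:ENNReal)) ^ d ≠ 0 := pow_ne_zero d (by norm_num)
  have h2 : ((2:ENNReal)) ^ d ≠ ⊤ := ENNReal.pow_ne_top (by norm_num)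
  exact (ENNReal.eq_div_iff h1 h2).mpr key.symm

lemma weyl_finite (d : ℕ) (p T : ℝ) (hp : 0 < p) :
    {n : Fin d → ℕ | (∀ i, 0 < n i) ∧ ∑ i, (n i : ℝ) ^ p ≤ T}.Finite := by
  refine Set.Finite.subset (Set.Finite.pi fun i : Fin d =>
    Set.finite_Iic (⌊T ^ (1/p)⌋₊)) ?_
  rintro n ⟨h1, h2⟩
  intro i _
  have hterm : (n i : ℝ) ^ p ≤ T := by
    refine le_trans (Finset.single_le_sum (f := fun j => (n j : ℝ) ^ p) (fun j _ => ?_) (Finset.mem_univ i)) h2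
    exact rpow_nonneg (Nat.cast_nonneg _) _
  have := weyl_coord_le' hp (Nat.cast_nonneg (n i)) hterm
  exact Set.mem_Iic.mpr (Nat.le_floor this)

lemma weyl_cube_vol (d : ℕ) (n : Fin d → ℕ) :
    volume (Set.pi Set.univ fun i => Set.Ico ((n i : ℝ) - 1) (n i)) = 1 := by
  rw [volume_pi_pi]
  simp [Real.volume_Ico]

lemma weyl_cube_meas (d : ℕ) (n : Fin d → ℕ) :
    MeasurableSet (Set.pi Set.univ fun i => Set.Ico ((n i : ℝ) - 1) (n i)) :=
  MeasurableSet.univ_pi fun i => measurableSet_Ico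

lemma weyl_cube_disjoint (d : ℕ) {m n : Fin d → ℕ} (h : m ≠ n) :
    Disjoint (Set.pi Set.univ fun i => Set.Ico ((m i : ℝ) - 1) (m i))
      (Set.pi Set.univ fun i => Set.Ico ((n i : ℝ) - 1) (n i)) := by
  rw [Set.disjoint_left]
  intro x hxm hxn
  refine h (funext fun i => ?_)
  have h1 := hxm i (Set.mem_univ i)
  have h2 := hxn i (Set.mem_univ i)
  simp only [Set.mem_Ico] at h1 h2
  have hmn : (m i : ℝ) < n i + 1 := by linarith [h1.1, h1.2, h2.1, h2.2]
  have hnm : (n i : ℝ) < m i + 1 := by linarith [h1.1, h1.2, h2.1, h2.2]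
  have : m i < n i + 1 := by exact_mod_cast hmn
  have : n i < m i + 1 := by exact_mod_cast hnm
  omega

lemma weyl_card_eq_vol (d : ℕ) (S : Set (Fin d → ℕ)) (hS : S.Finite) :
    volume (⋃ n ∈ S, Set.pi Set.univ fun i => Set.Ico ((n i : ℝ) - 1) (n i))
      = Nat.card S := by
  classical
  have hU : (⋃ n ∈ S, Set.pi Set.univ fun i => Set.Ico ((n i : ℝ) - 1) (n i))
      = ⋃ n ∈ hS.toFinset, Set.pi Set.univ fun i => Set.Ico ((n i : ℝ) - 1) (n i) := by
    simp [hS.mem_toFinset]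
  rw [hU, measure_biUnion_finset ?hd fun n _ => weyl_cube_meas d n]
  · simp only [weyl_cube_vol]
    rw [Finset.sum_const, nsmul_eq_mul, mul_one,
      Nat.card_coe_set_eq, Set.ncard_eq_toFinset_card S hS]
  · intro m hm n hn hmn
    exact weyl_cube_disjoint d hmn

lemma weyl_sandwich (d : ℕ) (p : ℝ) (hp : 0 < p) (T : ℝ) :
    volume {x : Fin d → ℝ | (∀ i, 0 ≤ x i) ∧ ∑ i, (x i + 1) ^ p ≤ T}
      ≤ (Nat.card {n : Fin d → ℕ | (∀ i, 0 < n i) ∧ ∑ i, (n i : ℝ) ^ p ≤ T} : ENNReal)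
    ∧ (Nat.card {n : Fin d → ℕ | (∀ i, 0 < n i) ∧ ∑ i, (n i : ℝ) ^ p ≤ T} : ENNReal)
      ≤ volume {x : Fin d → ℝ | (∀ i, 0 ≤ x i) ∧ ∑ i, (x i) ^ p ≤ T} := by
  set S := {n : Fin d → ℕ | (∀ i, 0 < n i) ∧ ∑ i, (n i : ℝ) ^ p ≤ T} with hS
  have hfin : S.Finite := weyl_finite d p T hp
  have hcard := weyl_card_eq_vol d S hfin
  constructor
  · rw [← hcard]
    refine measure_mono ?_
    rintro x ⟨hx1, hx2⟩
    refine Set.mem_biUnion (?_ : (fun i => Nat.floor (x i) + 1) ∈ S) ?_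
    · refine ⟨fun i => Nat.succ_pos _, ?_⟩
      refine le_trans (Finset.sum_le_sum fun i _ => ?_) hx2
      refine rpow_le_rpow (Nat.cast_nonneg _) ?_ (le_of_lt hp)
      push_cast
      linarith [Nat.floor_le (hx1 i)]
    · intro i _
      simp only [Set.mem_Ico]
      constructor
      · push_cast
        linarith [Nat.floor_le (hx1 i)]
      · push_cast
        linarith [Nat.lt_floor_add_one (x i)]
  · rw [← hcard]
    refine measure_mono ?_
    intro x hx
    obtain ⟨n, hn, hxn⟩ := Set.mem_iUnion₂.mp hx
    have hmem := fun i => hxn i (Set.mem_univ i)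
    simp only [Set.mem_Ico] at hmem
    constructor
    · intro i
      have h1 : (1:ℝ) ≤ (n i : ℝ) := by exact_mod_cast hn.1 i
      linarith [(hmem i).1]
    · refine le_trans (Finset.sum_le_sum fun i _ => ?_) hn.2
      have h1 : (1:ℝ) ≤ (n i : ℝ) := by exact_mod_cast hn.1 i
      refine rpow_le_rpow ?_ (le_of_lt (hmem i).2) (le_of_lt hp)
      linarith [(hmem i).1]

theorem weyl_law_cube (d : ℕ) (hd : 1 ≤ d) (s : ℝ) (hs1 : 1 / 2 < s) (hs2 : s ≤ 1)
    (L : ℝ) (hL : 0 < L) :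
    Tendsto (fun E : ℝ =>
        (Nat.card {n : Fin d → ℕ |
            (∀ i, 0 < n i) ∧ ∑ i, ((n i : ℝ) * Real.pi / L) ^ (2 * s) ≤ E} : ℝ) /
          E ^ ((d : ℝ) / (2 * s)))
      atTop
      (nhds (L ^ d / (2 * Real.pi) ^ d *
        ((2 * Real.Gamma (1 + 1 / (2 * s))) ^ d / Real.Gamma (1 + d / (2 * s))))) := by
  have hπ := Real.pi_pos
  set p : ℝ := 2 * s with hpdef
  have hp1 : 1 ≤ p := by rw [hpdef]; linarith
  have hp0 : 0 < p := by linarith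
  set lam : ℝ := L / π with hlam
  have hlam0 : 0 < lam := div_pos hL hπ
  set κ : ℝ := lam ^ p with hκ
  have hκ0 : 0 < κ := rpow_pos_of_pos hlam0 _
  set c : ℝ := (π / L) ^ p with hc
  have hc0 : 0 < c := rpow_pos_of_pos (div_pos hπ hL) _
  have hcκ : c * κ = 1 := by
    rw [hc, hκ, hlam, ← Real.mul_rpow (le_of_lt (div_pos hπ hL)) (le_of_lt hlam0)]
    rw [div_mul_div_comm, mul_comm π L, div_self (by positivity), Real.one_rpow]
  set c₀ : ℝ := (2 * Gamma (1/p + 1)) ^ d / Gamma ((d:ℝ)/p + 1) with hc₀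
  have hc₀0 : 0 < c₀ := by
    apply div_pos
    · exact pow_pos (by
        have := Real.Gamma_pos_of_pos (by positivity : (0:ℝ) < 1/p + 1)
        linarith) d
    · exact Real.Gamma_pos_of_pos (by positivity)
  set C : ℝ := lam ^ d * c₀ / 2 ^ d with hC
  -- set identification
  have hseteq : ∀ E : ℝ, {n : Fin d → ℕ |
      (∀ i, 0 < n i) ∧ ∑ i, ((n i : ℝ) * Real.pi / L) ^ p ≤ E}
      = {n : Fin d → ℕ | (∀ i, 0 < n i) ∧ ∑ i, (n i : ℝ) ^ p ≤ E * κ} := by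
    intro E
    ext n
    simp only [Set.mem_setOf_eq, and_congr_right_iff]
    intro hn
    have hsum : ∑ i, ((n i : ℝ) * Real.pi / L) ^ p = c * ∑ i, (n i : ℝ) ^ p := by
      rw [Finset.mul_sum]
      refine Finset.sum_congr rfl fun i _ => ?_
      rw [mul_div_assoc, mul_comm ((n i : ℝ)) (π / L),
        Real.mul_rpow (by positivity) (Nat.cast_nonneg _)]
    rw [hsum]
    constructor
    · intro h
      calc ∑ i, (n i : ℝ) ^ p = (c * ∑ i, (n i : ℝ) ^ p) * κ := by
            rw [mul_comm c, mul_assoc, hcκ, mul_one]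
        _ ≤ E * κ := mul_le_mul_of_nonneg_right h (le_of_lt hκ0)
    · intro h
      have h2 := mul_le_mul_of_nonneg_left h (le_of_lt hc0)
      calc c * ∑ i, (n i : ℝ) ^ p ≤ c * (E * κ) := h2
        _ = E * (c * κ) := by ring
        _ = E := by rw [hcκ, mul_one]
  -- quotient bounds
  have hquot : ∀ E : ℝ, 1 ≤ E →
      C - (d * lam ^ (d-1)) * E ^ (-(1/p)) ≤
        (Nat.card {n : Fin d → ℕ | (∀ i, 0 < n i) ∧ ∑ i, (n i : ℝ) ^ p ≤ E * κ} : ℝ)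
          / E ^ ((d:ℝ)/p)
      ∧ (Nat.card {n : Fin d → ℕ | (∀ i, 0 < n i) ∧ ∑ i, (n i : ℝ) ^ p ≤ E * κ} : ℝ)
          / E ^ ((d:ℝ)/p) ≤ C := by
    intro E hE
    have hE0 : (0:ℝ) < E := by linarith
    set T : ℝ := E * κ with hT
    have hT0 : 0 ≤ T := by positivity
    set Nc : ℕ := Nat.card {n : Fin d → ℕ | (∀ i, 0 < n i) ∧ ∑ i, (n i : ℝ) ^ p ≤ T}
      with hNc
    -- basic rpow computations
    have hTp : T ^ (1/p) = E ^ (1/p) * lam := by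
      rw [hT, hκ, Real.mul_rpow (le_of_lt hE0) (le_of_lt hκ0)]
      congr 1
      rw [← Real.rpow_mul (le_of_lt hlam0), mul_one_div_cancel (ne_of_gt hp0),
        Real.rpow_one]
    have hTpd : (T ^ (1/p)) ^ d = E ^ ((d:ℝ)/p) * lam ^ d := by
      rw [hTp, mul_pow, ← Real.rpow_natCast (E ^ (1/p)) d,
        ← Real.rpow_mul (le_of_lt hE0)]
      congr 2
      ring
    have hEd0 : (0:ℝ) < E ^ ((d:ℝ)/p) := rpow_pos_of_pos hE0 _
    -- volume of the big orthant region as ofReal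
    have hO := weyl_orthant_volume d hd p hp1 T hT0
    have h2d : ((2:ENNReal)) ^ d = ENNReal.ofReal ((2:ℝ) ^ d) := by
      rw [ENNReal.ofReal_pow (by norm_num : (0:ℝ) ≤ 2)]
      norm_num
    have hvol : volume {x : Fin d → ℝ | (∀ i, 0 ≤ x i) ∧ ∑ i, (x i) ^ p ≤ T}
        = ENNReal.ofReal ((T ^ (1/p)) ^ d * c₀ / 2 ^ d) := by
      rw [hO, h2d, ← ENNReal.ofReal_pow (rpow_nonneg hT0 _),
        ← ENNReal.ofReal_mul (by positivity),
        ← ENNReal.ofReal_div_of_pos (by positivity)]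
    -- upper bound
    have hub : (Nc : ℝ) ≤ (T ^ (1/p)) ^ d * c₀ / 2 ^ d := by
      have h1 := (weyl_sandwich d p hp0 T).2
      rw [hvol] at h1
      rw [← ENNReal.ofReal_natCast Nc] at h1
      exact (ENNReal.ofReal_le_ofReal_iff (by positivity)).mp h1
    -- lower bound
    have hlb : (T ^ (1/p)) ^ d * c₀ / 2 ^ d - d * (T ^ (1/p)) ^ (d-1) ≤ (Nc : ℝ) := by
      have h1 := (weyl_vol_lower d p hp0 T hT0).trans
        (add_le_add_left (weyl_sandwich d p hp0 T).1 _)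
      rw [hvol] at h1
      have h2 : (Nc : ENNReal) + (d:ENNReal) * ENNReal.ofReal (T ^ (1/p)) ^ (d-1)
          = ENNReal.ofReal ((Nc : ℝ) + d * (T ^ (1/p)) ^ (d-1)) := by
        rw [ENNReal.ofReal_add (Nat.cast_nonneg _) (by positivity),
          ENNReal.ofReal_natCast,
          ENNReal.ofReal_mul (Nat.cast_nonneg _),
          ENNReal.ofReal_natCast,
          ENNReal.ofReal_pow (rpow_nonneg hT0 _)]
      rw [h2] at h1
      have h3 := (ENNReal.ofReal_le_ofReal_iff (by positivity)).mp h1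
      linarith
    constructor
    · -- lower quotient bound
      rw [le_div_iff₀ hEd0]
      have hexp : E ^ (-(1/p)) * E ^ ((d:ℝ)/p) = (E ^ (1/p)) ^ (d-1) := by
        rw [← Real.rpow_natCast (E ^ (1/p)) (d-1),
          ← Real.rpow_mul (le_of_lt hE0), ← Real.rpow_add hE0]
        congr 1
        rw [Nat.cast_sub hd]
        push_cast
        field_simp
        ring
      have heq : (C - (d * lam ^ (d-1)) * E ^ (-(1/p))) * E ^ ((d:ℝ)/p)
          = (T ^ (1/p)) ^ d * c₀ / 2 ^ d - d * (T ^ (1/p)) ^ (d-1) := by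
        rw [hTpd, hTp, mul_pow (E ^ (1/p)) lam (d-1), ← hexp, hC]
        ring
      rw [heq]
      exact hlb
    · -- upper quotient bound
      rw [div_le_iff₀ hEd0]
      have heq : C * E ^ ((d:ℝ)/p) = (T ^ (1/p)) ^ d * c₀ / 2 ^ d := by
        rw [hTpd, hC]
        ring
      rw [heq]
      exact hub
  -- final limit
  have hCeq : L ^ d / (2 * π) ^ d *
      ((2 * Gamma (1 + 1 / p)) ^ d / Gamma (1 + (d:ℝ) / p)) = C := by
    rw [add_comm (1:ℝ) (1/p), add_comm (1:ℝ) ((d:ℝ)/p), hC, hc₀, hlam,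
      div_pow, mul_pow (2:ℝ) π]
    ring
  rw [show (nhds (L ^ d / (2 * Real.pi) ^ d *
      ((2 * Real.Gamma (1 + 1 / p)) ^ d / Real.Gamma (1 + (d:ℝ) / p)))) = nhds C from by
    rw [hCeq]]
  have hg : Tendsto (fun E : ℝ => C - (d * lam ^ (d-1)) * E ^ (-(1/p))) atTop (nhds C) := by
    have h0 : Tendsto (fun E : ℝ => E ^ (-(1/p))) atTop (nhds 0) :=
      tendsto_rpow_neg_atTop (by positivity)
    have := tendsto_const_nhds (x := C) (f := atTop (α := ℝ)) |>.sub
      (h0.const_mul ((d : ℝ) * lam ^ (d-1)))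
    simpa using this
  refine tendsto_of_tendsto_of_tendsto_of_le_of_le' hg
    (tendsto_const_nhds (x := C) (f := atTop)) ?_ ?_
  · filter_upwards [eventually_ge_atTop (1:ℝ)] with E hE
    rw [hseteq E]
    exact (hquot E hE).1
  · filter_upwards [eventually_ge_atTop (1:ℝ)] with E hE
    rw [hseteq E]
    exact (hquot E hE).2
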